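/- Monotone decrease of TSD: for the TSD iteration on a strongly convex quadratic f, whenever g_k ≠ 0 we have f(x_{k+1}) < f(x_k), both at ordinary Cauchy steps and at the triangle steps using p_k = -α_{k-1}g_{k-1} - α_{k-2}g_{k-2}. -/

import Mathlib

open Matrix

/-- Monotone decrease of TSD: whenever g_k ≠ 0, f(x_{k+1}) < f(x_k), both at
ordinary Cauchy steps and at the triangle steps. -/
theorem tsd_monotone_decrease {n : ℕ}
    (A : Matrix (Fin n) (Fin n) ℝ) (hA : A.PosDef) (b : Fin n → ℝ)
    (f : (Fin n → ℝ) → ℝ)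
    (hf : ∀ z, f z = (1 / 2) * (z ⬝ᵥ (A *ᵥ z)) + b ⬝ᵥ z)
    (j : ℕ) (hj : 3 ≤ j)
    (x g p : ℕ → Fin n → ℝ) (α : ℕ → ℝ)
    (hg : ∀ k, g k = A *ᵥ x k + b)
    (hp : ∀ k, p k = if k ≠ 0 ∧ j ∣ k
      then (-(α (k - 1))) • g (k - 1) - (α (k - 2)) • g (k - 2) else -(g k))
    (hα : ∀ k, α k = -(p k ⬝ᵥ g k) / (p k ⬝ᵥ (A *ᵥ p k)))
    (hstep : ∀ k, x (k + 1) = if g k = 0 then x k else x k + α k • p k) :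
    ∀ k, g k ≠ 0 → f (x (k + 1)) < f (x k) := by
  -- symmetry of A in the bilinear form
  have hAt : Aᵀ = A := by simpa using hA.1.eq
  have hsym : ∀ v w : Fin n → ℝ, v ⬝ᵥ (A *ᵥ w) = w ⬝ᵥ (A *ᵥ v) := by
    intro v w
    rw [dotProduct_mulVec, ← mulVec_transpose, hAt, dotProduct_comm]
  have hpos : ∀ v : Fin n → ℝ, v ≠ 0 → 0 < v ⬝ᵥ (A *ᵥ v) := by
    intro v hv
    simpa using hA.re_dotProduct_pos hv
  have hself : ∀ v : Fin n → ℝ, v ≠ 0 → 0 < v ⬝ᵥ v := by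
    intro v hv
    have h0 : 0 ≤ v ⬝ᵥ v := Finset.sum_nonneg fun i _ => mul_self_nonneg _
    rcases h0.lt_or_eq with h | h
    · exact h
    · exact absurd (dotProduct_self_eq_zero.mp h.symm) hv
  -- quadratic expansion
  have hquad : ∀ (z d : Fin n → ℝ) (c : ℝ),
      f (z + c • d) = f z + c * (d ⬝ᵥ (A *ᵥ z + b)) + c ^ 2 / 2 * (d ⬝ᵥ (A *ᵥ d)) := by
    intro z d c
    simp only [hf, mulVec_add, mulVec_smul, dotProduct_add, add_dotProduct,
      dotProduct_smul, smul_dotProduct, smul_eq_mul]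
    rw [hsym d z, dotProduct_comm b d]
    ring
  -- descent whenever p k ⬝ᵥ g k < 0
  have key : ∀ k, g k ≠ 0 → p k ⬝ᵥ g k < 0 → f (x (k + 1)) < f (x k) := by
    intro k hgk hs
    have hpk : p k ≠ 0 := by
      intro h
      rw [h, zero_dotProduct] at hs
      exact lt_irrefl 0 hs
    have hq : 0 < p k ⬝ᵥ (A *ᵥ p k) := hpos _ hpk
    rw [hstep k, if_neg hgk, hquad, ← hg k, hα k]
    set s := p k ⬝ᵥ g k with hs'
    set q := p k ⬝ᵥ (A *ᵥ p k) with hq'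
    have hne : q ≠ 0 := ne_of_gt hq
    have : -s / q * s + (-s / q) ^ 2 / 2 * q = -(s ^ 2 / (2 * q)) := by
      field_simp
      ring
    have h2 : 0 < s ^ 2 / (2 * q) :=
      div_pos (pow_two_pos_of_ne_zero (ne_of_lt hs)) (by linarith)
    linarith
  intro k hgk
  by_cases hc : k ≠ 0 ∧ j ∣ k
  · -- triangle step
    have hk3 : 3 ≤ k := le_trans hj (Nat.le_of_dvd (Nat.pos_of_ne_zero hc.1) hc.2)
    have e1 : k - 1 + 1 = k := by omega
    have e2 : k - 2 + 1 = k - 1 := by omega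
    have hnd1 : ¬(k - 1 ≠ 0 ∧ j ∣ (k - 1)) := by
      rintro ⟨h0, hd⟩
      have h1 : j ∣ k - (k - 1) := Nat.dvd_sub hc.2 hd
      rw [show k - (k - 1) = 1 by omega] at h1
      have := Nat.le_of_dvd one_pos h1
      omega
    have hnd2 : ¬(k - 2 ≠ 0 ∧ j ∣ (k - 2)) := by
      rintro ⟨h0, hd⟩
      have h1 : j ∣ k - (k - 2) := Nat.dvd_sub hc.2 hd
      rw [show k - (k - 2) = 2 by omega] at h1
      have := Nat.le_of_dvd two_pos h1
      omega
    have hp1 : p (k - 1) = -(g (k - 1)) := by rw [hp, if_neg hnd1]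
    have hp2 : p (k - 2) = -(g (k - 2)) := by rw [hp, if_neg hnd2]
    -- previous gradients are nonzero
    have hg1 : g (k - 1) ≠ 0 := by
      intro h0
      apply hgk
      have hx := hstep (k - 1)
      rw [if_pos h0, e1] at hx
      rw [hg k, hx, ← hg (k - 1), h0]
    have hg2 : g (k - 2) ≠ 0 := by
      intro h0
      apply hg1
      have hx := hstep (k - 2)
      rw [if_pos h0, e2] at hx
      rw [hg (k - 1), hx, ← hg (k - 2), h0]
    -- stepsizes at Cauchy steps
    have hαval : ∀ m, p m = -(g m) →
        α m = (g m ⬝ᵥ g m) / (g m ⬝ᵥ (A *ᵥ g m)) := by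
      intro m hm
      rw [hα, hm]
      simp [neg_dotProduct, dotProduct_neg, mulVec_neg]
    have hα1 := hαval (k - 1) hp1
    have hα2 := hαval (k - 2) hp2
    have hα1pos : 0 < α (k - 1) := by
      rw [hα1]; exact div_pos (hself _ hg1) (hpos _ hg1)
    have hα2pos : 0 < α (k - 2) := by
      rw [hα2]; exact div_pos (hself _ hg2) (hpos _ hg2)
    -- gradient recurrences
    have hrec : ∀ m, g m ≠ 0 → p m = -(g m) →
        g (m + 1) = g m - α m • (A *ᵥ g m) := by
      intro m hm hpm
      have hx := hstep m
      rw [if_neg hm] at hx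
      rw [hg (m + 1), hx, mulVec_add, mulVec_smul, hpm, mulVec_neg, hg m]
      module
    have hrec1 : g k = g (k - 1) - α (k - 1) • (A *ᵥ g (k - 1)) := by
      have := hrec (k - 1) hg1 hp1
      rwa [e1] at this
    have hrec2 : g (k - 1) = g (k - 2) - α (k - 2) • (A *ᵥ g (k - 2)) := by
      have := hrec (k - 2) hg2 hp2
      rwa [e2] at this
    -- orthogonality of consecutive gradients
    have horth : ∀ m, g m ≠ 0 → p m = -(g m) → g (m + 1) = g m - α m • (A *ᵥ g m) →
        g m ⬝ᵥ g (m + 1) = 0 := by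
      intro m hm hpm hr
      rw [hr, dotProduct_sub, dotProduct_smul, smul_eq_mul, hαval m hpm]
      have := ne_of_gt (hpos _ hm)
      field_simp
      ring
    have horth1 : g (k - 1) ⬝ᵥ g k = 0 := by
      have := horth (k - 1) hg1 hp1 (by rwa [e1])
      rwa [e1] at this
    have horth2 : g (k - 2) ⬝ᵥ g (k - 1) = 0 := by
      have := horth (k - 2) hg2 hp2 (by rwa [e2])
      rwa [e2] at this
    -- cross term: α₂ * (g₁ ⬝ A g₂) = -(g₁ ⬝ g₁)
    have h1 : g (k - 1) ⬝ᵥ g (k - 1)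
        = g (k - 1) ⬝ᵥ g (k - 2) - α (k - 2) * (g (k - 1) ⬝ᵥ (A *ᵥ g (k - 2))) := by
      conv_lhs => rw [show g (k - 1) ⬝ᵥ g (k - 1) = g (k - 1) ⬝ᵥ g (k - 1) from rfl]
      nth_rewrite 2 [hrec2]
      simp only [dotProduct_sub, dotProduct_smul, smul_eq_mul]
    have hX : α (k - 2) * (g (k - 1) ⬝ᵥ (A *ᵥ g (k - 2))) = -(g (k - 1) ⬝ᵥ g (k - 1)) := by
      have hc12 : g (k - 1) ⬝ᵥ g (k - 2) = 0 := by
        rw [dotProduct_comm]; exact horth2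
      rw [hc12] at h1
      linarith
    -- value of g₂ ⬝ g k
    have hgk2 : g (k - 2) ⬝ᵥ g k = -(α (k - 1)) * (g (k - 1) ⬝ᵥ (A *ᵥ g (k - 2))) := by
      rw [hrec1, dotProduct_sub, dotProduct_smul, smul_eq_mul, horth2,
        hsym (g (k - 2)) (g (k - 1))]
      ring
    -- conclude p k ⬝ᵥ g k < 0
    apply key k hgk
    rw [hp k, if_pos hc]
    simp only [sub_dotProduct, smul_dotProduct, smul_eq_mul, neg_mul]
    rw [horth1, hgk2]
    have hgg1 : 0 < g (k - 1) ⬝ᵥ g (k - 1) := hself _ hg1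
    have : α (k - 2) * (-(α (k - 1)) * (g (k - 1) ⬝ᵥ (A *ᵥ g (k - 2))))
        = α (k - 1) * (g (k - 1) ⬝ᵥ g (k - 1)) := by
      calc α (k - 2) * (-(α (k - 1)) * (g (k - 1) ⬝ᵥ (A *ᵥ g (k - 2))))
          = -(α (k - 1)) * (α (k - 2) * (g (k - 1) ⬝ᵥ (A *ᵥ g (k - 2)))) := by ring
        _ = -(α (k - 1)) * (-(g (k - 1) ⬝ᵥ g (k - 1))) := by rw [hX]
        _ = α (k - 1) * (g (k - 1) ⬝ᵥ g (k - 1)) := by ring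
    rw [this]
    nlinarith [mul_pos hα1pos hgg1]
  · -- Cauchy step
    apply key k hgk
    rw [hp k, if_neg hc, neg_dotProduct]
    exact neg_neg_of_pos (hself _ hgk)
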